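/- Given an infinite i.i.d. sequence of uniform random vectors in $\mathbb{F}_2^m$, the expected value of the minimum number $A$ of initial vectors needed to span $\mathbb{F}_2^m$ is $\mathbb{E}[A] = m + \sum_{i=1}^{m} \frac{1}{2^i - 1}$. -/

import Mathlib

open MeasureTheory ProbabilityTheory
open scoped ENNReal
open Finset Matrix

instance : MeasurableSpace (ZMod 2) := ⊤





/-- `ff j n = ∏_{i<j} (1 - 2^i / 2^n)`. -/
noncomputable def ff (j n : ℕ) : ℝ := ∏ i ∈ range j, (1 - 2^i * ((2:ℝ)⁻¹)^n)

noncomputable def cc (j : ℕ) : ℝ := ∏ i ∈ range j, (1 - ((2:ℝ)⁻¹)^(i+1))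

noncomputable def DD (j : ℕ) (x : ℝ) : ℝ := ∏ i ∈ range (j+1), (1 - x * ((2:ℝ)⁻¹)^i)

lemma DD_pos {j : ℕ} {x : ℝ} (h0 : 0 ≤ x) (h1 : x < 1) : 0 < DD j x := by
  apply Finset.prod_pos
  intro i _
  have hle : x * ((2:ℝ)⁻¹)^i ≤ x * 1 := by
    apply mul_le_mul_of_nonneg_left _ h0
    exact pow_le_one₀ (by norm_num) (by norm_num)
  nlinarith

lemma key_hasSum (j : ℕ) : ∀ x : ℝ, 0 ≤ x → x < 1 →
    HasSum (fun n => ff j n * x^n) (cc j * x^j / DD j x) := by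
  induction j with
  | zero =>
      intro x h0 h1
      simpa [ff, cc, DD] using hasSum_geometric_of_lt_one h0 h1
  | succ j ih =>
      intro x h0 h1
      have h2 := ih (x/2) (by linarith) (by linarith)
      have h := (ih x h0 h1).sub (h2.mul_left ((2:ℝ)^j))
      have hpt : ∀ n : ℕ, ff j n * x^n - (2:ℝ)^j * (ff j n * (x/2)^n)
          = ff (j+1) n * x^n := by
        intro n
        have hx2 : (x/2)^n = x^n * ((2:ℝ)⁻¹)^n := by
          rw [div_eq_mul_inv, mul_pow]
        simp only [ff, prod_range_succ]
        rw [hx2]; ring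
      rw [funext hpt] at h
      convert h using 1
      case e'_3 => exact rfl
      -- value identity
      have hcs : cc (j+1) = cc j * (1 - ((2:ℝ)⁻¹)^(j+1)) := prod_range_succ _ _
      have hD1 : DD (j+1) x = DD j x * (1 - x * ((2:ℝ)⁻¹)^(j+1)) := prod_range_succ _ _
      have hD2 : DD (j+1) x = DD j (x/2) * (1 - x) := by
        rw [DD, prod_range_succ']
        congr 1
        · apply prod_congr rfl
          intro i _
          congr 1
          rw [pow_succ]
          ring
        · norm_num
      have ha : DD j x ≠ 0 := ne_of_gt (DD_pos h0 h1)
      have hb : DD j (x/2) ≠ 0 := ne_of_gt (DD_pos (by linarith) (by linarith))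
      have hc : DD (j+1) x ≠ 0 := ne_of_gt (DD_pos h0 h1)
      have h2j : (2:ℝ)^j * ((2:ℝ)⁻¹)^j = 1 := by
        rw [← mul_pow]; norm_num
      rw [hcs, div_eq_iff hc]
      have e1 : cc j * x ^ j / DD j x * DD (j+1) x
          = cc j * x ^ j * (1 - x * ((2:ℝ)⁻¹)^(j+1)) := by
        rw [hD1]; field_simp
      have e2 : (2:ℝ)^j * (cc j * (x/2) ^ j / DD j (x/2)) * DD (j+1) x
          = cc j * x ^ j * (1 - x) := by
        rw [hD2]
        have : (x/2)^j = x^j * ((2:ℝ)⁻¹)^j := by rw [div_eq_mul_inv, mul_pow]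
        rw [this]
        field_simp
        have h2j' : (2:ℝ)^j * (1/2)^j = 1 := by rw [one_div]; exact h2j
        linear_combination (cc j * x ^ j * (1 - x)) * h2j'
      rw [sub_mul, e1, e2]
      ring

lemma cc_pos (j : ℕ) : 0 < cc j := by
  apply Finset.prod_pos
  intro i _
  have : ((2:ℝ)⁻¹)^(i+1) < 1 := by
    apply pow_lt_one₀ <;> norm_num
  linarith

lemma twoj_hasSum (j : ℕ) :
    HasSum (fun n => (2:ℝ)^j * (ff j n * ((2:ℝ)⁻¹)^n)) (1 + ((2:ℝ)^(j+1) - 1)⁻¹) := by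
  have h := (key_hasSum j ((2:ℝ)⁻¹) (by norm_num) (by norm_num)).mul_left ((2:ℝ)^j)
  convert h using 1
  case e'_3 => exact rfl
  have hD : DD j ((2:ℝ)⁻¹) = cc (j+1) := by
    rw [DD, cc]
    apply prod_congr rfl
    intro i _
    congr 1
    rw [pow_succ]
    ring
  rw [hD, show cc (j+1) = cc j * (1 - ((2:ℝ)⁻¹)^(j+1)) from prod_range_succ _ _]
  have hcc := cc_pos j
  have h1 : ((2:ℝ)⁻¹)^(j+1) < 1 := by apply pow_lt_one₀ <;> norm_num
  have h2 : (1:ℝ) < (2:ℝ)^(j+1) := one_lt_pow₀ (by norm_num) (by omega)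
  have h2j : (2:ℝ)^(j+1) * ((2:ℝ)⁻¹)^(j+1) = 1 := by rw [← mul_pow]; norm_num
  have hd : (2:ℝ)^(j+1) - 1 ≠ 0 := by linarith
  have hcn : cc j ≠ 0 := ne_of_gt hcc
  have h2n : (2:ℝ)^j ≠ 0 := by positivity
  have hj1 : (1:ℝ) - ((2:ℝ)⁻¹)^(j+1) = ((2:ℝ)^(j+1) - 1) * ((2:ℝ)⁻¹)^(j+1) := by
    nlinarith [h2j]
  rw [hj1]
  rw [show (2:ℝ)^j * (cc j * ((2:ℝ)⁻¹)^j / (cc j * (((2:ℝ)^(j+1) - 1) * ((2:ℝ)⁻¹)^(j+1))))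
      = ((2:ℝ)^j * ((2:ℝ)⁻¹)^j) * cc j / (cc j * (((2:ℝ)^(j+1) - 1) * ((2:ℝ)⁻¹)^(j+1)) * ((2:ℝ)⁻¹)⁻¹ * 2⁻¹) by
    field_simp]
  have h2jj : (2:ℝ)^j * ((2:ℝ)⁻¹)^j = 1 := by rw [← mul_pow]; norm_num
  rw [h2jj, pow_succ]
  have hd' : (2:ℝ)^j * 2 - 1 ≠ 0 := by rw [← pow_succ]; exact hd
  field_simp
  ring
  rw [← mul_pow]; norm_num

lemma main_hasSum (m : ℕ) :
    HasSum (fun n => 1 - ff m n)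
      ((m : ℝ) + ∑ i ∈ Finset.Icc 1 m, ((2:ℝ)^i - 1)⁻¹) := by
  have h : HasSum (fun n => ∑ j ∈ range m, (2:ℝ)^j * (ff j n * ((2:ℝ)⁻¹)^n))
      (∑ j ∈ range m, (1 + ((2:ℝ)^(j+1) - 1)⁻¹)) :=
    hasSum_sum fun j _ => twoj_hasSum j
  have hpt : ∀ n, ∑ j ∈ range m, (2:ℝ)^j * (ff j n * ((2:ℝ)⁻¹)^n) = 1 - ff m n := by
    intro n
    have : ∀ j, (2:ℝ)^j * (ff j n * ((2:ℝ)⁻¹)^n) = ff j n - ff (j+1) n := by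
      intro j
      simp only [ff, prod_range_succ]
      ring
    rw [sum_congr rfl fun j _ => this j, Finset.sum_range_sub']
    simp [ff]
  rw [funext hpt] at h
  convert h using 1
  rw [Finset.sum_add_distrib]
  congr 1
  · simp
  · rw [← Finset.Ico_add_one_right_eq_Icc, Finset.sum_Ico_eq_sum_range]
    simp [add_comm 1]

lemma ff_eq_zero {m n : ℕ} (h : n < m) : ff m n = 0 := by
  apply Finset.prod_eq_zero (Finset.mem_range.mpr h)
  have : (2:ℝ)^n * ((2:ℝ)⁻¹)^n = 1 := by rw [← mul_pow]; norm_num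
  linarith

lemma ff_nonneg (m n : ℕ) : 0 ≤ ff m n := by
  rcases lt_or_ge n m with h | h
  · rw [ff_eq_zero h]
  · apply Finset.prod_nonneg
    intro i hi
    have hi' : i < m := Finset.mem_range.mp hi
    have : (2:ℝ)^i * ((2:ℝ)⁻¹)^n ≤ (2:ℝ)^n * ((2:ℝ)⁻¹)^n := by
      apply mul_le_mul_of_nonneg_right _ (by positivity)
      exact pow_le_pow_right₀ (by norm_num) (by omega)
    have h2 : (2:ℝ)^n * ((2:ℝ)⁻¹)^n = 1 := by rw [← mul_pow]; norm_num
    linarith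

lemma ff_le_one (m n : ℕ) : ff m n ≤ 1 := by
  rcases lt_or_ge n m with h | h
  · rw [ff_eq_zero h]; norm_num
  · apply Finset.prod_le_one
    · intro i hi
      have hi' : i < m := Finset.mem_range.mp hi
      have : (2:ℝ)^i * ((2:ℝ)⁻¹)^n ≤ (2:ℝ)^n * ((2:ℝ)⁻¹)^n := by
        apply mul_le_mul_of_nonneg_right _ (by positivity)
        exact pow_le_pow_right₀ (by norm_num) (by omega)
      have h2 : (2:ℝ)^n * ((2:ℝ)⁻¹)^n = 1 := by rw [← mul_pow]; norm_num
      linarith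
    · intro i _
      have : (0:ℝ) ≤ 2^i * ((2:ℝ)⁻¹)^n := by positivity
      linarith

lemma ff_tail_bound (m n : ℕ) : 1 - ff m n ≤ 2^m * ((2:ℝ)⁻¹)^n := by
  induction m with
  | zero => simp [ff]
  | succ m ih =>
      have hs : ff (m+1) n = ff m n * (1 - 2^m * ((2:ℝ)⁻¹)^n) := prod_range_succ _ _
      have h1 := ff_le_one m n
      have h0 := ff_nonneg m n
      have ha : (0:ℝ) ≤ 2^m * ((2:ℝ)⁻¹)^n := by positivity
      have : ff m n * (2^m * ((2:ℝ)⁻¹)^n) ≤ 2^m * ((2:ℝ)⁻¹)^n := by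
        nlinarith
      rw [hs, pow_succ]
      nlinarith



lemma span_top_iff_li {n m : ℕ} (v : Fin n → (Fin m → ZMod 2)) :
    Submodule.span (ZMod 2) (Set.range v) = ⊤ ↔
      LinearIndependent (ZMod 2) (Function.swap v) := by
  set M : Matrix (Fin n) (Fin m) (ZMod 2) := Matrix.of v with hM
  have h1 : Mᵀ.rank = Module.finrank (ZMod 2) (Submodule.span (ZMod 2) (Set.range v)) := by
    rw [Matrix.rank_eq_finrank_span_cols]
    rfl
  have h2 : M.rank = (Set.range (Function.swap v)).finrank (ZMod 2) := by
    rw [Matrix.rank_eq_finrank_span_cols]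
    rfl
  have h3 : Mᵀ.rank = M.rank := Matrix.rank_transpose M
  rw [linearIndependent_iff_card_eq_finrank_span]
  constructor
  · intro h
    rw [Fintype.card_fin, ← h2, ← h3, h1, h]
    rw [finrank_top, Module.finrank_fintype_fun_eq_card, Fintype.card_fin]
  · intro h
    apply Submodule.eq_top_of_finrank_eq
    rw [← h1, h3, h2, ← h]
    rw [Fintype.card_fin, Module.finrank_fintype_fun_eq_card, Fintype.card_fin]

lemma card_spanning (n m : ℕ) :
    Nat.card {v : Fin n → (Fin m → ZMod 2) // Submodule.span (ZMod 2) (Set.range v) = ⊤}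
      = ∏ i ∈ Finset.range m, (2^n - 2^i) := by
  rcases lt_or_ge n m with h | h
  · have he : IsEmpty {v : Fin n → (Fin m → ZMod 2) //
        Submodule.span (ZMod 2) (Set.range v) = ⊤} := by
      constructor
      rintro ⟨v, hv⟩
      have h1 : (Set.range v).finrank (ZMod 2) ≤ Fintype.card (Fin n) :=
        finrank_range_le_card v
      rw [Set.finrank, hv, finrank_top, Module.finrank_fintype_fun_eq_card,
        Fintype.card_fin, Fintype.card_fin] at h1
      omega
    rw [Nat.card_of_isEmpty]
    exact (Finset.prod_eq_zero (Finset.mem_range.mpr h) (by omega)).symm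
  · have e : {v : Fin n → (Fin m → ZMod 2) // Submodule.span (ZMod 2) (Set.range v) = ⊤}
        ≃ {s : Fin m → (Fin n → ZMod 2) // LinearIndependent (ZMod 2) s} :=
      Equiv.subtypeEquiv ⟨Function.swap, Function.swap, fun _ => rfl, fun _ => rfl⟩
        (fun v => span_top_iff_li v)
    rw [Nat.card_congr e, card_linearIndependent (by
      rw [Module.finrank_fintype_fun_eq_card, Fintype.card_fin]; exact h)]
    rw [← Finset.prod_range fun i =>
      (Fintype.card (ZMod 2))^(Module.finrank (ZMod 2) (Fin n → ZMod 2)) - (Fintype.card (ZMod 2))^i]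
    apply Finset.prod_congr rfl
    intro i _
    rw [Module.finrank_fintype_fun_eq_card, Fintype.card_fin, ZMod.card]


lemma msall {m : ℕ} (S : Set (Fin m → ZMod 2)) : MeasurableSet S := by
  have hsing : ∀ w : Fin m → ZMod 2, MeasurableSet {w} := by
    intro w
    have : {w} = ⋂ i, (fun g : Fin m → ZMod 2 => g i) ⁻¹' {w i} := by
      ext g
      simp [funext_iff]
    rw [this]
    exact MeasurableSet.iInter fun i => measurable_pi_apply i trivial
  have : S = ⋃ w ∈ S, {w} := by simp
  rw [this]
  exact MeasurableSet.biUnion S.to_countable fun w _ => hsing w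

lemma partition_nullMeasurable {Ω : Type*} [MeasurableSpace Ω] {μ : Measure Ω}
    [IsProbabilityMeasure μ] {ι : Type*} [Fintype ι] {s : ι → Set Ω}
    (hcov : (⋃ i, s i) = Set.univ) (hdisj : Pairwise (Function.onFun Disjoint s))
    (hsum : ∑ i, μ (s i) = 1) (i : ι) : NullMeasurableSet (s i) μ := by
  classical
  set t : ι → Set Ω := fun j => MeasureTheory.toMeasurable μ (s j) with ht
  have hst : ∀ j, s j ⊆ t j := fun j => subset_toMeasurable μ (s j)
  have hμt : ∀ j, μ (t j) = μ (s j) := fun j => measure_toMeasurable (s j)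
  set u : Set Ω := (⋃ j ∈ Finset.univ.erase i, t j)ᶜ with hu
  have hu_meas : MeasurableSet u := by
    apply MeasurableSet.compl
    exact MeasurableSet.biUnion (Finset.univ.erase i : Finset ι).countable_toSet
      fun j _ => measurableSet_toMeasurable μ (s j)
  have hu_sub : u ⊆ s i := by
    intro ω hω
    have h1 : ω ∈ ⋃ j, s j := hcov ▸ Set.mem_univ ω
    obtain ⟨j, hj⟩ := Set.mem_iUnion.mp h1
    by_cases hji : j = i
    · exact hji ▸ hj
    · exfalso
      apply hω
      exact Set.mem_biUnion (Finset.mem_erase.mpr ⟨hji, Finset.mem_univ j⟩) (hst j hj)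
  -- μ (s i) ≤ μ u
  have hcover : (Set.univ : Set Ω) ⊆ u ∪ ⋃ j ∈ Finset.univ.erase i, t j := by
    intro ω _
    by_cases h : ω ∈ ⋃ j ∈ Finset.univ.erase i, t j
    · exact Or.inr h
    · exact Or.inl h
  have h1 : (1 : ℝ≥0∞) ≤ μ u + ∑ j ∈ Finset.univ.erase i, μ (s j) := by
    calc (1 : ℝ≥0∞) = μ Set.univ := (measure_univ).symm
    _ ≤ μ (u ∪ ⋃ j ∈ Finset.univ.erase i, t j) := measure_mono hcover
    _ ≤ μ u + μ (⋃ j ∈ Finset.univ.erase i, t j) := measure_union_le _ _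
    _ ≤ μ u + ∑ j ∈ Finset.univ.erase i, μ (t j) := by
        gcongr
        exact measure_biUnion_finset_le _ _
    _ = μ u + ∑ j ∈ Finset.univ.erase i, μ (s j) := by
        congr 1
        exact Finset.sum_congr rfl fun j _ => hμt j
  have h2 : μ (s i) + ∑ j ∈ Finset.univ.erase i, μ (s j) = 1 := by
    rw [← hsum]
    exact Finset.add_sum_erase _ (fun j => μ (s j)) (Finset.mem_univ i)
  have hfin : ∑ j ∈ Finset.univ.erase i, μ (s j) ≠ ∞ := by
    intro h
    rw [h] at h2
    simp at h2
  have hle : μ (s i) ≤ μ u := by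
    have h3 := h2.le.trans h1
    rw [add_comm (μ (s i)), add_comm (μ u)] at h3
    exact ENNReal.le_of_add_le_add_left hfin h3
  have hut : u ⊆ t i := hu_sub.trans (hst i)
  have hdiff : μ (t i \ u) = 0 := by
    rw [measure_diff hut hu_meas.nullMeasurableSet (measure_ne_top μ u)]
    rw [hμt]
    exact tsub_eq_zero_of_le hle
  have hsdiff : μ (s i \ u) = 0 :=
    measure_mono_null (Set.diff_subset_diff_left (hst i)) hdiff
  refine (hu_meas.nullMeasurableSet).congr ?_
  rw [Filter.eventuallyEq_set]
  have : ∀ᵐ ω ∂μ, ω ∉ s i \ u := by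
    rw [MeasureTheory.ae_iff]
    simpa only [not_not, Set.setOf_mem_eq] using hsdiff
  filter_upwards [this] with ω hω
  constructor
  · intro h; exact hu_sub h
  · intro h
    by_contra hc
    exact hω ⟨h, hc⟩

section events

variable {Ω : Type*} [MeasurableSpace Ω] {μ : Measure Ω} [IsProbabilityMeasure μ]
  {m : ℕ} {q : ℕ → Ω → (Fin m → ZMod 2)}

lemma measure_Tset
    (hindep : iIndepFun q μ)
    (hunif : ∀ i, ∀ w : Fin m → ZMod 2, μ (q i ⁻¹' {w}) = ((2 : ℝ≥0∞) ^ m)⁻¹)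
    (n : ℕ) (v : Fin n → (Fin m → ZMod 2)) :
    μ (⋂ i : Fin n, q i ⁻¹' {v i}) = (((2 : ℝ≥0∞) ^ m)⁻¹) ^ n := by
  classical
  set F : ℕ → Set (Fin m → ZMod 2) :=
    fun k => if h : k < n then ({v ⟨k, h⟩} : Set (Fin m → ZMod 2)) else Set.univ with hF
  have hrw : (⋂ i : Fin n, q i ⁻¹' {v i}) = ⋂ k ∈ Finset.range n, q k ⁻¹' (F k) := by
    ext ω
    simp only [Set.mem_iInter, Set.mem_preimage, Finset.mem_range]
    constructor
    · intro h k hk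
      simp only [hF, dif_pos hk]
      exact h ⟨k, hk⟩
    · intro h i
      have := h i.val i.isLt
      simpa [hF, i.isLt] using this
  rw [hrw, hindep.meas_biInter (fun k _ => ⟨F k, msall (F k), rfl⟩)]
  have hterm : ∀ k ∈ Finset.range n, μ (q k ⁻¹' (F k)) = ((2:ℝ≥0∞)^m)⁻¹ := by
    intro k hk
    have hk' : k < n := Finset.mem_range.mp hk
    rw [hF]
    simp only [dif_pos hk']
    exact hunif k _
  have hprod : ∏ k ∈ Finset.range n, μ (q k ⁻¹' (F k)) = (((2:ℝ≥0∞))^m)⁻¹ ^ n := by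
    rw [Finset.prod_congr rfl hterm, Finset.prod_const, Finset.card_range]
  exact hprod

lemma nullMeasurable_Tset
    (hindep : iIndepFun q μ)
    (hunif : ∀ i, ∀ w : Fin m → ZMod 2, μ (q i ⁻¹' {w}) = ((2 : ℝ≥0∞) ^ m)⁻¹)
    (n : ℕ) (v : Fin n → (Fin m → ZMod 2)) :
    NullMeasurableSet (⋂ i : Fin n, q i ⁻¹' {v i}) μ := by
  classical
  apply partition_nullMeasurable (s := fun v : Fin n → (Fin m → ZMod 2) =>
    ⋂ i : Fin n, q i ⁻¹' {v i})
  · ext ω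
    simp only [Set.mem_iUnion, Set.mem_iInter, Set.mem_preimage, Set.mem_univ, iff_true]
    exact ⟨fun i => q i ω, fun i => rfl⟩
  · intro a b hab
    simp only [Function.onFun, Set.disjoint_left]
    intro ω hω hω'
    simp only [Set.mem_iInter, Set.mem_preimage, Set.mem_singleton_iff] at hω hω'
    exact hab (funext fun i => (hω i).symm.trans (hω' i))
  · rw [Finset.sum_congr rfl (fun v _ => measure_Tset hindep hunif n v)]
    rw [Finset.sum_const, nsmul_eq_mul, Finset.card_univ]
    have hcard : (Fintype.card ((Fin n) → (Fin m → ZMod 2))) = (2 ^ m) ^ n := by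
      rw [Fintype.card_fun]
      congr 1
      · rw [Fintype.card_fun, ZMod.card, Fintype.card_fin]
      · rw [Fintype.card_fin]
    rw [hcard]
    push_cast
    rw [← mul_pow, ENNReal.mul_inv_cancel (by positivity) (by simp), one_pow]

lemma cast_prod_eq (m n : ℕ) :
    ((∏ i ∈ Finset.range m, (2^n - 2^i) : ℕ) : ℝ) = 2^(m*n) * ff m n := by
  rcases lt_or_ge n m with h | h
  · rw [Finset.prod_eq_zero (Finset.mem_range.mpr h) (by omega : (2:ℕ)^n - 2^n = 0)]
    rw [ff_eq_zero h]
    simp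
  · rw [Nat.cast_prod]
    have h2 : (2:ℝ)^n * ((2:ℝ)⁻¹)^n = 1 := by rw [← mul_pow]; norm_num
    have hterm : ∀ i ∈ Finset.range m, ((2^n - 2^i : ℕ) : ℝ)
        = 2^n * (1 - 2^i * ((2:ℝ)⁻¹)^n) := by
      intro i hi
      have hi' : i < m := Finset.mem_range.mp hi
      rw [Nat.cast_sub (Nat.pow_le_pow_right (by norm_num) (by omega))]
      push_cast
      rw [mul_sub, mul_one, show (2:ℝ)^n * (2^i * ((2:ℝ)⁻¹)^n)
        = 2^i * ((2:ℝ)^n * ((2:ℝ)⁻¹)^n) by ring, h2, mul_one]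
    rw [Finset.prod_congr rfl hterm, Finset.prod_mul_distrib, Finset.prod_const,
      Finset.card_range, ← pow_mul, mul_comm n m]
    rfl

lemma measure_span_event
    (hindep : iIndepFun q μ)
    (hunif : ∀ i, ∀ w : Fin m → ZMod 2, μ (q i ⁻¹' {w}) = ((2 : ℝ≥0∞) ^ m)⁻¹)
    (n : ℕ) :
    μ {ω | Submodule.span (ZMod 2) ((fun i => q i ω) '' (Set.Iio n)) = ⊤}
      = ENNReal.ofReal (ff m n) ∧
    NullMeasurableSet {ω | Submodule.span (ZMod 2)
      ((fun i => q i ω) '' (Set.Iio n)) = ⊤} μ := by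
  classical
  set P : (Fin n → (Fin m → ZMod 2)) → Prop :=
    fun v => Submodule.span (ZMod 2) (Set.range v) = ⊤ with hP
  have himg : ∀ ω : Ω, (fun i => q i ω) '' (Set.Iio n)
      = Set.range (fun i : Fin n => q i.val ω) := by
    intro ω; ext x
    constructor
    · rintro ⟨k, hk, rfl⟩; exact ⟨⟨k, hk⟩, rfl⟩
    · rintro ⟨i, rfl⟩; exact ⟨i.val, i.isLt, rfl⟩
  have hset : {ω | Submodule.span (ZMod 2) ((fun i => q i ω) '' (Set.Iio n)) = ⊤}
      = ⋃ v ∈ Finset.univ.filter P, ⋂ i : Fin n, q i.val ⁻¹' {v i} := by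
    ext ω
    simp only [Set.mem_setOf_eq, Set.mem_iUnion, Finset.mem_filter, Finset.mem_univ, true_and,
      Set.mem_iInter, Set.mem_preimage, Set.mem_singleton_iff]
    constructor
    · intro h
      rw [himg] at h
      exact ⟨fun i => q i.val ω, h, fun i => rfl⟩
    · rintro ⟨v, hv, hq⟩
      have hvq : (fun i : Fin n => q i.val ω) = v := funext hq
      rw [himg, hvq]
      exact hv
  have hdisj : (↑(Finset.univ.filter P) : Set (Fin n → (Fin m → ZMod 2))).Pairwise
      (Function.onFun (MeasureTheory.AEDisjoint μ) fun v => ⋂ i : Fin n, q i.val ⁻¹' {v i}) := by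
    intro a _ b _ hab
    apply Disjoint.aedisjoint
    simp only [Set.disjoint_left]
    intro ω hω hω'
    simp only [Set.mem_iInter, Set.mem_preimage, Set.mem_singleton_iff] at hω hω'
    exact hab (funext fun i => (hω i).symm.trans (hω' i))
  have hnullT : ∀ v ∈ Finset.univ.filter P,
      NullMeasurableSet (⋂ i : Fin n, q i.val ⁻¹' {v i}) μ :=
    fun v _ => nullMeasurable_Tset hindep hunif n v
  constructor
  · rw [hset, measure_biUnion_finset₀ hdisj hnullT]
    rw [Finset.sum_congr rfl (fun v _ => measure_Tset hindep hunif n v),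
      Finset.sum_const, nsmul_eq_mul]
    have hcard : (Finset.univ.filter P).card = ∏ i ∈ Finset.range m, (2^n - 2^i) := by
      rw [← Fintype.card_subtype, ← Nat.card_eq_fintype_card]
      exact card_spanning n m
    rw [hcard]
    have hpow : (((2:ℝ≥0∞))^m)⁻¹ ^ n = ENNReal.ofReal ((((2:ℝ))^m)⁻¹ ^ n) := by
      rw [ENNReal.ofReal_pow (by positivity), ENNReal.ofReal_inv_of_pos (by positivity),
        ENNReal.ofReal_pow (by norm_num)]
      norm_num
    rw [hpow, ← ENNReal.ofReal_natCast, ← ENNReal.ofReal_mul (by positivity)]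
    congr 1
    rw [cast_prod_eq]
    have hip : (((2:ℝ))^m)⁻¹ ^ n = ((2:ℝ)^(m*n))⁻¹ := by
      rw [inv_pow, ← pow_mul]
    rw [hip]
    rw [mul_comm ((2:ℝ)^(m*n)) (ff m n), mul_assoc,
      mul_inv_cancel₀ (by positivity : ((2:ℝ)^(m*n)) ≠ 0), mul_one]
  · rw [hset]
    exact NullMeasurableSet.biUnion (Finset.univ.filter P).countable_toSet
      (fun v _ => nullMeasurable_Tset hindep hunif n v)

end events

/-- The expected minimum number `A` of initial vectors of an infinite i.i.d.
uniform sequence in `𝔽₂ᵐ` needed to span `𝔽₂ᵐ` is `m + ∑_{i=1}^m 1/(2ⁱ - 1)`. -/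
theorem expected_min_spanning_count
    {Ω : Type*} [MeasurableSpace Ω] (μ : Measure Ω) [IsProbabilityMeasure μ]
    {m : ℕ} (hm : 1 ≤ m) (q : ℕ → Ω → (Fin m → ZMod 2))
    (hindep : iIndepFun q μ)
    (hunif : ∀ i, ∀ w : Fin m → ZMod 2, μ (q i ⁻¹' {w}) = ((2 : ℝ≥0∞) ^ m)⁻¹)
    (A : Ω → ℕ)
    (hA : ∀ ω, A ω = sInf {n | Submodule.span (ZMod 2)
      ((fun i => q i ω) '' (Set.Iio n)) = ⊤}) :
    ∫ ω, (A ω : ℝ) ∂μ = m + ∑ i ∈ Finset.Icc 1 m, ((2 : ℝ) ^ i - 1)⁻¹ := by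

  classical
  set Sp : ℕ → Set Ω := fun n => {ω | Submodule.span (ZMod 2)
      ((fun i => q i ω) '' (Set.Iio n)) = ⊤} with hSpDef
  have hSp : ∀ n, μ (Sp n) = ENNReal.ofReal (ff m n) :=
    fun n => (measure_span_event hindep hunif n).1
  have hSpN : ∀ n, NullMeasurableSet (Sp n) μ :=
    fun n => (measure_span_event hindep hunif n).2
  have hcompl : ∀ n, μ (Sp n)ᶜ = ENNReal.ofReal (1 - ff m n) := by
    intro n
    rw [measure_compl₀ (hSpN n) (measure_ne_top μ _), hSp n, measure_univ]
    rw [ENNReal.ofReal_sub _ (ff_nonneg m n), ENNReal.ofReal_one]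
  have hmono : ∀ k n : ℕ, k ≤ n → Sp k ⊆ Sp n := by
    intro k n hkn ω hω
    simp only [hSpDef, Set.mem_setOf_eq] at hω ⊢
    rw [eq_top_iff, ← hω]
    exact Submodule.span_mono (Set.image_mono (Set.Iio_subset_Iio hkn))
  set Bad : Set Ω := ⋂ k, (Sp k)ᶜ with hBadDef
  have hBad : μ Bad = 0 := by
    have hb : ∀ k, μ Bad ≤ ENNReal.ofReal (2^m * ((2:ℝ)⁻¹)^k) := by
      intro k
      refine (measure_mono (Set.iInter_subset _ k)).trans ?_
      rw [hcompl k]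
      exact ENNReal.ofReal_le_ofReal (ff_tail_bound m k)
    have htend : Filter.Tendsto (fun k => ENNReal.ofReal (2^m * ((2:ℝ)⁻¹)^k))
        Filter.atTop (nhds 0) := by
      have h0 : Filter.Tendsto (fun k : ℕ => 2^m * ((2:ℝ)⁻¹)^k) Filter.atTop (nhds 0) := by
        have := (tendsto_pow_atTop_nhds_zero_of_lt_one
          (by norm_num : (0:ℝ) ≤ 2⁻¹) (by norm_num : (2:ℝ)⁻¹ < 1)).const_mul ((2:ℝ)^m)
        simpa using this
      have := ENNReal.tendsto_ofReal h0
      simpa using this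
    have := ge_of_tendsto' htend hb
    simpa using this
  have hsub1 : ∀ n, Sp n ⊆ {ω | A ω ≤ n} := by
    intro n ω hω
    simp only [Set.mem_setOf_eq, hA ω]
    exact Nat.sInf_le hω
  have hsub2 : ∀ n, {ω | A ω ≤ n} \ Sp n ⊆ Bad := by
    intro n ω hω
    obtain ⟨hωA, hωS⟩ := hω
    simp only [hBadDef, Set.mem_iInter, Set.mem_compl_iff]
    intro k hk
    have hne : {n' | Submodule.span (ZMod 2) ((fun i => q i ω) '' (Set.Iio n')) = ⊤}.Nonempty :=
      ⟨k, hk⟩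
    have hmem := Nat.sInf_mem hne
    have : ω ∈ Sp (A ω) := by
      rw [hA ω]
      exact hmem
    exact hωS (hmono _ _ hωA this)
  have hAle : ∀ n, {ω | A ω ≤ n} =ᵐ[μ] Sp n := by
    intro n
    rw [MeasureTheory.ae_eq_set]
    constructor
    · exact measure_mono_null (hsub2 n) hBad
    · rw [Set.diff_eq_empty.mpr (hsub1 n)]
      exact measure_empty
  have hAgt : ∀ n, {ω | n < A ω} = {ω | A ω ≤ n}ᶜ := by
    intro n; ext ω; simp
  have hAevent : ∀ n, μ {ω | n < A ω} = ENNReal.ofReal (1 - ff m n) := by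
    intro n
    rw [hAgt n]
    exact (measure_congr (MeasureTheory.ae_eq_set_compl_compl.mpr (hAle n))).trans (hcompl n)
  have hAgtNull : ∀ n, NullMeasurableSet {ω | n < A ω} μ := by
    intro n
    rw [hAgt n]
    exact ((hSpN n).congr (hAle n).symm).compl
  have hAleNull : ∀ n, NullMeasurableSet {ω | A ω ≤ n} μ :=
    fun n => (hSpN n).congr (hAle n).symm
  -- A is a.e.-measurable
  have hNM : NullMeasurable A μ := by
    intro s _
    have hrw : A ⁻¹' s = ⋃ k ∈ s, {ω | A ω = k} := by
      ext ω; simp [Set.mem_preimage]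
    rw [hrw]
    apply NullMeasurableSet.biUnion s.to_countable
    intro k _
    cases k with
    | zero =>
        have : {ω | A ω = 0} = {ω | A ω ≤ 0} := by ext ω; simp [Nat.le_zero]
        rw [this]; exact hAleNull 0
    | succ k =>
        have : {ω | A ω = k+1} = {ω | A ω ≤ k+1} \ {ω | A ω ≤ k} := by
          ext ω; simp only [Set.mem_setOf_eq, Set.mem_diff]; omega
        rw [this]
        exact (hAleNull (k+1)).diff (hAleNull k)
  have hAmeas : AEMeasurable A μ := hNM.aemeasurable
  have hAsm : AEStronglyMeasurable (fun ω => (A ω : ℝ)) μ :=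
    ((measurable_from_top : Measurable (fun n : ℕ => (n : ℝ))).comp_aemeasurable
      hAmeas).aestronglyMeasurable
  rw [MeasureTheory.integral_eq_lintegral_of_nonneg_ae
    (Filter.Eventually.of_forall fun ω => by positivity) hAsm]
  have hlin : ∫⁻ ω, ENNReal.ofReal ((A ω : ℝ)) ∂μ
      = ∑' n, μ {ω | n < A ω} := by
    have hpt : ∀ ω, ENNReal.ofReal ((A ω : ℝ))
        = ∑' n, Set.indicator {ω' | n < A ω'} (fun _ => (1:ℝ≥0∞)) ω := by
      intro ω
      rw [ENNReal.ofReal_natCast]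
      rw [tsum_eq_sum (s := Finset.range (A ω)) (fun n hn => by
        apply Set.indicator_of_notMem
        simp only [Set.mem_setOf_eq]
        simpa using Finset.mem_range.not.mp hn)]
      rw [Finset.sum_congr rfl (fun n hn => by
        apply Set.indicator_of_mem
        simpa using Finset.mem_range.mp hn)]
      rw [Finset.sum_const, Finset.card_range, nsmul_eq_mul, mul_one]
    rw [lintegral_congr hpt]
    rw [lintegral_tsum (fun n => by
      have hind : Set.indicator {ω' | n < A ω'} (fun _ => (1:ℝ≥0∞))
          =ᵐ[μ] Set.indicator (MeasureTheory.toMeasurable μ {ω' | n < A ω'})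
            (fun _ => (1:ℝ≥0∞)) :=
        indicator_ae_eq_of_ae_eq_set ((hAgtNull n).toMeasurable_ae_eq).symm
      apply AEMeasurable.congr _ hind.symm
      exact (measurable_one.indicator (measurableSet_toMeasurable μ _)).aemeasurable)]
    congr 1
    funext n
    rw [lintegral_indicator₀ (hAgtNull n), setLIntegral_one]
  rw [hlin]
  have hsum : ∑' n, μ {ω | n < A ω}
      = ENNReal.ofReal ((m : ℝ) + ∑ i ∈ Finset.Icc 1 m, ((2:ℝ)^i - 1)⁻¹) := by
    rw [tsum_congr hAevent]
    rw [← ENNReal.ofReal_tsum_of_nonneg (fun n => by linarith [ff_le_one m n])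
      (main_hasSum m).summable]
    rw [(main_hasSum m).tsum_eq]
  rw [hsum, ENNReal.toReal_ofReal]
  have : ∀ i ∈ Finset.Icc 1 m, (0:ℝ) ≤ ((2:ℝ)^i - 1)⁻¹ := by
    intro i hi
    have : (1:ℝ) ≤ 2^i := one_le_pow₀ (by norm_num)
    have h2 : (0:ℝ) ≤ 2^i - 1 := by linarith
    positivity
  have hs := Finset.sum_nonneg this
  positivity
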